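/- Let n ≥ k ≥ 1 and let B ∈ M_{n,k}(F) with rank(B) ≤ 1. Then for every A ∈ M_{n,k}(F) there exist a₀, a₁ ∈ F such that det_{n,k}(A + λB) = a₀ + a₁·λ for all λ ∈ F; that is, the function λ ↦ det_{n,k}(A + λB) is a polynomial of degree at most 1 in λ. -/

import Mathlib

/- The Cullis determinant of an `n × k` matrix: the alternating sum of its maximal
(`k × k`) minors, indexed by strictly increasing selections of `k` rows. -/
open Classical in
noncomputable def cullisDet {F : Type*} [Field F] {n k : ℕ} (X : Matrix (Fin n) (Fin k) F) : F :=
  ∑ f ∈ Finset.univ.filter (fun f : Fin k → Fin n => StrictMono f),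
    (-1 : F) ^ (∑ α : Fin k, ((f α : ℕ) + (α : ℕ))) * (X.submatrix f id).det

/-- Key lemma: determinant of a rank-one update is affine in the parameter. -/
theorem det_add_smul_outer {F : Type*} [Field F] {k : ℕ}
    (M : Matrix (Fin k) (Fin k) F) (u v : Fin k → F) (lam : F) :
    (Matrix.of fun i j => M i j + lam * (u i * v j)).det
      = M.det + (∑ i, u i * (M.updateRow i v).det) * lam := by
  classical
  set f := (Matrix.detRowAlternating : (Fin k → F) [⋀^Fin k]→ₗ[F] F) with hf
  set m' : Fin k → (Fin k → F) := fun i => (lam * u i) • v with hm'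
  set mM : Fin k → (Fin k → F) := fun i j => M i j with hmM
  have hmat : (Matrix.of fun i j => M i j + lam * (u i * v j)) = Matrix.of (m' + mM) := by
    funext i j
    show M i j + lam * (u i * v j) = (lam * u i) * v j + M i j
    ring
  have hdet : (Matrix.of fun i j => M i j + lam * (u i * v j)).det = f (m' + mM) := by
    rw [hmat]; rfl
  have hexp : f (m' + mM) = ∑ s : Finset (Fin k), f (s.piecewise m' mM) :=
    f.toMultilinearMap.map_add_univ m' mM
  rw [hdet, hexp]
  have h2 : ∀ s : Finset (Fin k), 2 ≤ s.card → f (s.piecewise m' mM) = 0 := by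
    intro s hs
    obtain ⟨i, hi, j, hj, hij⟩ := Finset.one_lt_card.mp hs
    set w := s.piecewise m' mM with hw
    have hwiv : w i = (lam * u i) • v := Finset.piecewise_eq_of_mem s m' mM hi
    have hwi : Function.update w i ((lam * u i) • v) = w := by
      rw [← hwiv]; exact Function.update_eq_self i w
    have step1 : f w = (lam * u i) • f (Function.update w i v) := by
      conv_lhs => rw [← hwi]
      rw [f.map_update_smul]
    set w1 := Function.update w i v with hw1
    have hw1j : w1 j = (lam * u j) • v := by
      rw [hw1, Function.update_of_ne (Ne.symm hij)]
      exact Finset.piecewise_eq_of_mem s m' mM hj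
    have hwj1 : Function.update w1 j ((lam * u j) • v) = w1 := by
      rw [← hw1j]; exact Function.update_eq_self j w1
    have step2 : f w1 = (lam * u j) • f (Function.update w1 j v) := by
      conv_lhs => rw [← hwj1]
      rw [f.map_update_smul]
    have hzero : f (Function.update w1 j v) = 0 := by
      apply f.map_eq_zero_of_eq _ (i := i) (j := j) _ hij
      rw [Function.update_of_ne hij, Function.update_self, hw1, Function.update_self]
    rw [step1, step2, hzero, smul_zero, smul_zero]
  have hsum : ∑ s : Finset (Fin k), f (s.piecewise m' mM)
      = ∑ s ∈ Finset.univ.filter (fun s : Finset (Fin k) => s.card ≤ 1),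
          f (s.piecewise m' mM) := by
    symm
    apply Finset.sum_filter_of_ne
    intro s _ hne
    by_contra hcard
    exact hne (h2 s (by omega))
  have hset : Finset.univ.filter (fun s : Finset (Fin k) => s.card ≤ 1)
      = insert ∅ (Finset.univ.image fun i : Fin k => ({i} : Finset (Fin k))) := by
    ext s
    simp only [Finset.mem_filter, Finset.mem_univ, true_and, Finset.mem_insert,
      Finset.mem_image]
    constructor
    · intro h
      rcases Nat.le_one_iff_eq_zero_or_eq_one.mp h with h0 | h1
      · exact Or.inl (Finset.card_eq_zero.mp h0)
      · obtain ⟨i, rfl⟩ := Finset.card_eq_one.mp h1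
        exact Or.inr ⟨i, rfl⟩
    · rintro (rfl | ⟨i, rfl⟩) <;> simp
  have hempty : (∅ : Finset (Fin k)) ∉ Finset.univ.image fun i : Fin k => ({i} : Finset (Fin k)) := by
    intro h
    simp only [Finset.mem_image] at h
    obtain ⟨i, -, h⟩ := h
    exact Finset.singleton_ne_empty i h
  rw [hsum, hset, Finset.sum_insert hempty,
    Finset.sum_image (fun a _ b _ h => Finset.singleton_inj.mp h)]
  have h0 : f ((∅ : Finset (Fin k)).piecewise m' mM) = M.det := by
    rw [Finset.piecewise_empty]; rfl
  have h1 : ∀ i : Fin k, f (({i} : Finset (Fin k)).piecewise m' mM)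
      = (lam * u i) * (M.updateRow i v).det := by
    intro i
    rw [Finset.piecewise_singleton, hm']
    rw [f.map_update_smul]
    rfl
  rw [h0]
  rw [Finset.sum_congr rfl (fun i _ => h1 i)]
  rw [Finset.sum_mul]
  congr 1
  apply Finset.sum_congr rfl
  intro i _
  ring

/-- if `rank B ≤ 1`, then for every `A` the function
`λ ↦ cullisDet (A + λ • B)` is a polynomial of degree at most `1`. -/
theorem cullis_rank_one_deg_le_one {F : Type*} [Field F] (n k : ℕ)
    (hk : 1 ≤ k) (hn : k ≤ n) (B : Matrix (Fin n) (Fin k) F) (hB : B.rank ≤ 1) :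
    ∀ A : Matrix (Fin n) (Fin k) F, ∃ a₀ a₁ : F, ∀ lam : F,
      cullisDet (A + lam • B) = a₀ + a₁ * lam := by
  classical
  -- Extract rank-one structure: B i j = u i * v j
  obtain ⟨w, hw⟩ := finrank_le_one_iff.mp hB
  set u : Fin n → F := (w : Fin n → F) with hu
  have hcol : ∀ j : Fin k, ∃ c : F, ∀ i, B i j = c * u i := by
    intro j
    have hmem : B.mulVec (Pi.single j 1) ∈ LinearMap.range B.mulVecLin :=
      ⟨Pi.single j 1, rfl⟩
    obtain ⟨c, hc⟩ := hw ⟨B.mulVec (Pi.single j 1), hmem⟩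
    refine ⟨c, fun i => ?_⟩
    have h1 := congrFun (congrArg Subtype.val hc) i
    simp only [SetLike.val_smul, Pi.smul_apply, smul_eq_mul] at h1
    have h2 : B.mulVec (Pi.single j 1) i = B i j := by simp [Matrix.mulVec_single]
    calc B i j = B.mulVec (Pi.single j 1) i := h2.symm
      _ = c * u i := h1.symm
  choose v hv using hcol
  intro A
  have key : ∀ f : Fin k → Fin n, ∃ b : F, ∀ lam : F,
      ((A + lam • B).submatrix f id).det = (A.submatrix f id).det + b * lam := by
    intro f
    refine ⟨∑ i, u (f i) * ((A.submatrix f id).updateRow i v).det, fun lam => ?_⟩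
    have : (A + lam • B).submatrix f id
        = Matrix.of fun i j => (A.submatrix f id) i j + lam * (u (f i) * v j) := by
      ext i j
      simp only [Matrix.submatrix_apply, Matrix.add_apply, Matrix.smul_apply, smul_eq_mul,
        Matrix.of_apply, id]
      rw [hv j (f i)]
      ring
    rw [this, det_add_smul_outer]
  choose b hb using key
  refine ⟨∑ f ∈ Finset.univ.filter (fun f : Fin k → Fin n => StrictMono f),
      (-1 : F) ^ (∑ α : Fin k, ((f α : ℕ) + (α : ℕ))) * (A.submatrix f id).det,
    ∑ f ∈ Finset.univ.filter (fun f : Fin k → Fin n => StrictMono f),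
      (-1 : F) ^ (∑ α : Fin k, ((f α : ℕ) + (α : ℕ))) * b f, fun lam => ?_⟩
  unfold cullisDet
  rw [Finset.sum_mul, ← Finset.sum_add_distrib]
  apply Finset.sum_congr rfl
  intro f _
  rw [hb f lam]
  ring
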